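/- For all positive reals λ and λ', the series Σ_{k=0}^∞ (1−λ')_k/(k!(λ+k)) converges and equals the beta function B(λ,λ') = ∫₀¹ s^(λ-1)(1-s)^(λ'-1) ds. -/

import Mathlib

open MeasureTheory

/-- The beta function `B(a,b) = ∫₀¹ s^(a-1) (1-s)^(b-1) ds`. -/
noncomputable def betaFn (a b : ℝ) : ℝ := ∫ s in (0:ℝ)..1, s ^ (a - 1) * (1 - s) ^ (b - 1)

/-- The regularized incomplete beta function `I(a,b;t)`. -/
noncomputable def regIncBeta (a b t : ℝ) : ℝ :=
  (betaFn a b)⁻¹ * ∫ s in (0:ℝ)..t, s ^ (a - 1) * (1 - s) ^ (b - 1)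

/-- `ℬ(λ,λ',μ,μ',ν,ν') = (1/B(λ,λ')) ∫₀¹ t^(λ-1)(1-t)^(λ'-1) I(μ,μ';t) I(ν,ν';t) dt`. -/
noncomputable def calB (l l' m m' n n' : ℝ) : ℝ :=
  (betaFn l l')⁻¹ * ∫ t in (0:ℝ)..1,
    t ^ (l - 1) * (1 - t) ^ (l' - 1) * regIncBeta m m' t * regIncBeta n n' t

/-- The Pochhammer symbol (rising factorial) `(a)_k = a(a+1)⋯(a+k-1)`. -/
noncomputable def poch (a : ℝ) (k : ℕ) : ℝ := ∏ i ∈ Finset.range k, (a + i)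

/-- The hypergeometric value `₃F₂(a₁,a₂,a₃; b₁,b₂; 1)`. -/
noncomputable def F32 (a1 a2 a3 b1 b2 : ℝ) : ℝ :=
  ∑' k : ℕ, poch a1 k * poch a2 k * poch a3 k / (poch b1 k * poch b2 k * (Nat.factorial k))

open intervalIntegral

lemma poch_succ (a : ℝ) (k : ℕ) : poch a (k + 1) = poch a k * (a + k) := by
  rw [poch, Finset.prod_range_succ]; rfl

lemma poch_bound (l' : ℝ) (hl' : 0 < l') (k : ℕ) :
    |poch (1 - l') k| ≤ (max 1 l') ^ (⌈l'⌉₊) * k.factorial := by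
  set M := max 1 l' with hM
  have hM1 : (1:ℝ) ≤ M := le_max_left _ _
  have key : ∀ k, |poch (1 - l') k| ≤ M ^ (min k ⌈l'⌉₊) * k.factorial := by
    intro k
    induction k with
    | zero => simp [poch]
    | succ n ih =>
      rw [poch_succ, abs_mul]
      rcases le_or_gt l' (n + 1) with h | h
      · have h1 : |1 - l' + n| ≤ (n:ℝ) + 1 := by
          rw [abs_le]; constructor <;> [linarith; linarith [hl'.le]]
        calc |poch (1-l') n| * |1 - l' + (n:ℝ)| ≤ (M ^ (min n ⌈l'⌉₊) * n.factorial) * ((n:ℝ)+1) := by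
              apply mul_le_mul ih h1 (abs_nonneg _) (by positivity)
          _ ≤ M ^ (min (n+1) ⌈l'⌉₊) * (n+1).factorial := by
              rw [Nat.factorial_succ]
              push_cast
              have : M ^ (min n ⌈l'⌉₊) ≤ M ^ (min (n+1) ⌈l'⌉₊) :=
                pow_le_pow_right₀ hM1 (by omega)
              calc M ^ (min n ⌈l'⌉₊) * (n.factorial:ℝ) * ((n:ℝ) + 1)
                  = M ^ (min n ⌈l'⌉₊) * (((n:ℝ)+1) * n.factorial) := by ring
                _ ≤ M ^ (min (n+1) ⌈l'⌉₊) * (((n:ℝ)+1) * n.factorial) :=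
                    mul_le_mul_of_nonneg_right this (by positivity)
      · -- n + 1 < l', so n < ⌈l'⌉₊ hence min n _ = n, min (n+1) _ = n+1
        have hn : (n:ℝ) < l' := by linarith
        have hnK : n + 1 ≤ ⌈l'⌉₊ := by
          have := Nat.lt_ceil.mpr (show (n:ℝ) < l' by linarith)
          omega
        have hmin1 : min n ⌈l'⌉₊ = n := by omega
        have hmin2 : min (n+1) ⌈l'⌉₊ = n + 1 := by omega
        have h1 : |1 - l' + n| ≤ l' := by
          rw [abs_le]; constructor
          · linarith
          · have : (0:ℝ) ≤ n := Nat.cast_nonneg n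
            linarith
        have h2 : l' ≤ M * ((n:ℝ)+1) := by
          calc l' ≤ M := le_max_right _ _
            _ ≤ M * ((n:ℝ)+1) := le_mul_of_one_le_right (by linarith) (by have : (0:ℝ) ≤ n := Nat.cast_nonneg n; linarith)
        rw [hmin1] at ih
        rw [hmin2, Nat.factorial_succ, pow_succ]
        push_cast
        calc |poch (1-l') n| * |1 - l' + (n:ℝ)| ≤ (M ^ n * n.factorial) * (M * ((n:ℝ)+1)) := by
              apply mul_le_mul ih (h1.trans h2) (abs_nonneg _) (by positivity)
          _ = M ^ n * M * (((n:ℝ)+1) * n.factorial) := by ring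
  calc |poch (1 - l') k| ≤ M ^ (min k ⌈l'⌉₊) * k.factorial := key k
    _ ≤ M ^ (⌈l'⌉₊) * k.factorial := by
        apply mul_le_mul_of_nonneg_right (pow_le_pow_right₀ hM1 (min_le_right _ _)) (by positivity)

lemma c_rec (l' : ℝ) (k : ℕ) :
    ((k:ℝ) + 1) * (poch (1 - l') (k+1) / (k+1).factorial) =
      (poch (1 - l') k / k.factorial) * (1 - l' + k) := by
  rw [poch_succ, Nat.factorial_succ]
  have h1 : ((k.factorial : ℝ)) ≠ 0 := by exact_mod_cast (Nat.factorial_pos k).ne'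
  have h2 : ((k:ℝ) + 1) ≠ 0 := by positivity
  field_simp
  push_cast
  ring

set_option maxHeartbeats 1600000 in
lemma binomial_hasSum (l' : ℝ) (hl' : 0 < l') {s : ℝ} (hs0 : 0 ≤ s) (hs1 : s < 1) :
    HasSum (fun k : ℕ => poch (1 - l') k / (k.factorial : ℝ) * s ^ k)
      ((1 - s) ^ (l' - 1)) := by
  set c : ℕ → ℝ := fun k => poch (1 - l') k / k.factorial with hc_def
  set r : ℝ := (1 + s) / 2 with hr_def
  have hr0 : 0 < r := by rw [hr_def]; linarith
  have hsr : s < r := by rw [hr_def]; linarith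
  have hr1 : r < 1 := by rw [hr_def]; linarith
  set D : ℝ := (max 1 l') ^ (⌈l'⌉₊) with hD_def
  have hD0 : 0 < D := by positivity
  have hc : ∀ k, |c k| ≤ D := by
    intro k
    rw [hc_def, abs_div, abs_of_nonneg (by positivity : (0:ℝ) ≤ (k.factorial:ℝ))]
    rw [div_le_iff₀ (by positivity)]
    exact poch_bound l' hl' k
  set t : Set ℝ := Set.Ioo (-r) r with ht_def
  have ht : IsOpen t := isOpen_Ioo
  have hpc : IsPreconnected t := (convex_Ioo _ _).isPreconnected
  have h0t : (0:ℝ) ∈ t := ⟨by linarith, hr0⟩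
  have hst : s ∈ t := ⟨by linarith, hsr⟩
  set g : ℕ → ℝ → ℝ := fun k y => c k * y ^ k with hg_def
  set g' : ℕ → ℝ → ℝ := fun k y => c k * (k * y ^ (k - 1)) with hg'_def
  set u : ℕ → ℝ := fun k => (D / r) * ((k : ℝ) * r ^ k) with hu_def
  have hu : Summable u := by
    have : Summable (fun k : ℕ => (k : ℝ) * r ^ k) := by
      have := summable_pow_mul_geometric_of_norm_lt_one (R := ℝ) 1
        (r := r) (by rw [Real.norm_eq_abs, abs_of_pos hr0]; exact hr1)
      simpa using this
    exact this.mul_left _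
  have hg : ∀ k y, HasDerivAt (g k) (g' k y) y := fun k y =>
    (hasDerivAt_pow k y).const_mul (c k)
  have hg' : ∀ k y, y ∈ t → ‖g' k y‖ ≤ u k := by
    intro k y hy
    have hyr : |y| ≤ r := le_of_lt (abs_lt.mpr ⟨hy.1, hy.2⟩)
    cases k with
    | zero => simp [hg'_def, hu_def]
    | succ n =>
      have : ‖g' (n+1) y‖ = |c (n+1)| * (((n:ℝ)+1) * |y| ^ n) := by
        rw [hg'_def]
        simp only [Real.norm_eq_abs, abs_mul]
        push_cast
        rw [abs_of_nonneg (by positivity : (0:ℝ) ≤ (n:ℝ)+1), abs_pow]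
      rw [this]
      have h1 : |c (n+1)| * (((n:ℝ)+1) * |y| ^ n) ≤ D * (((n:ℝ)+1) * r ^ n) := by
        apply mul_le_mul (hc _) _ (by positivity) hD0.le
        exact mul_le_mul_of_nonneg_left (pow_le_pow_left₀ (abs_nonneg _) hyr n) (by positivity)
      have h2 : D * (((n:ℝ)+1) * r ^ n) = u (n+1) := by
        rw [hu_def]
        push_cast
        field_simp
        ring
      rw [← h2]; exact h1
  have hg0 : Summable (fun k => g k 0) := by
    apply summable_of_ne_finset_zero (s := {0})
    intro k hk
    simp only [Finset.mem_singleton] at hk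
    simp [hg_def, zero_pow hk]
  have hsumm : ∀ y, y ∈ t → Summable (fun k => g k y) := fun y hy =>
    summable_of_summable_hasDerivAt_of_isPreconnected hu ht hpc
      (fun n z _ => hg n z) hg' h0t hg0 hy
  set f : ℝ → ℝ := fun y => ∑' k, g k y with hf_def
  have hder : ∀ y, y ∈ t → HasDerivAt f (∑' k, g' k y) y := fun y hy =>
    hasDerivAt_tsum_of_isPreconnected hu ht hpc (fun n z _ => hg n z) hg' h0t hg0 hy
  have hode : ∀ y, y ∈ t → (1 - y) * (∑' k, g' k y) + (l' - 1) * f y = 0 := by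
    intro y hy
    have hg'summ : Summable (fun k => g' k y) :=
      Summable.of_norm_bounded hu (fun k => hg' k y hy)
    have hgsumm := hsumm y hy
    have hterm : ∀ k, (1 - y) * g' k y + (l' - 1) * g k y = g' k y - g' (k+1) y := by
      intro k
      have hrec := c_rec l' k
      simp only [hg'_def, hg_def]
      cases k with
      | zero =>
        have hrec0 := c_rec l' 0
        simp only [Nat.cast_zero] at hrec0 ⊢
        have hc0 : c 0 = 1 := by simp [hc_def, poch]
        have hc1 : c 1 = 1 - l' := by
          simp [hc_def, poch]
        rw [hc0, hc1]
        norm_num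
      | succ n =>
        have hrecn := c_rec l' (n+1)
        push_cast at hrecn
        have e1 : (n + 1 + 1 : ℕ) - 1 = n + 1 := rfl
        have e2 : (n + 1 : ℕ) - 1 = n := rfl
        rw [e1, e2]
        push_cast
        have e3 : y ^ (n+1) = y ^ n * y := pow_succ y n
        -- identity
        have key : c (n+1+1) * (((n:ℝ)+1+1) * y^(n+1)) =
            c (n+1) * ((1 - l' + ((n:ℝ)+1)) * y^(n+1)) := by
          have : ((n:ℝ)+1+1) * c (n+1+1) = c (n+1) * (1 - l' + ((n:ℝ)+1)) := hrecn
          linear_combination y ^ (n+1) * this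
        rw [key, e3]
        ring
    have hdlim : Filter.Tendsto (fun k => g' k y) Filter.atTop (nhds 0) :=
      squeeze_zero_norm (fun k => hg' k y hy) hu.tendsto_atTop_zero
    have hsum2 : Summable (fun k => g' k y - g' (k+1) y) := by
      have heq : (fun k => g' k y - g' (k+1) y)
          = fun k => (1 - y) * g' k y + (l' - 1) * g k y :=
        funext fun k => (hterm k).symm
      rw [heq]
      exact (hg'summ.mul_left _).add (hgsumm.mul_left _)
    have htsum0 : ∑' k, (g' k y - g' (k+1) y) = 0 := by
      have h1 := hsum2.hasSum.tendsto_sum_nat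
      have h2 : Filter.Tendsto (fun n => ∑ i ∈ Finset.range n, (g' i y - g' (i+1) y))
          Filter.atTop (nhds (g' 0 y - 0)) := by
        simp only [Finset.sum_range_sub' (fun i => g' i y)]
        exact Filter.Tendsto.sub tendsto_const_nhds hdlim
      have h3 := tendsto_nhds_unique h1 h2
      have h4 : g' 0 y = 0 := by simp [hg'_def]
      rw [h3, h4, sub_zero]
    calc (1 - y) * (∑' k, g' k y) + (l' - 1) * f y
        = ∑' k, ((1 - y) * g' k y + (l' - 1) * g k y) := by
          simp only [hf_def]
          rw [← tsum_mul_left, ← tsum_mul_left,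
            ← Summable.tsum_add (hg'summ.mul_left _) (hgsumm.mul_left _)]
      _ = ∑' k, (g' k y - g' (k+1) y) := tsum_congr hterm
      _ = 0 := htsum0
  set h : ℝ → ℝ := fun y => f y * (1 - y) ^ (1 - l') with hh_def
  have hderh : ∀ y, y ∈ t → HasDerivAt h 0 y := by
    intro y hy
    have hy1 : 0 < 1 - y := by have := hy.2; simp only [ht_def, Set.mem_Ioo] at hy; linarith
    have h1 : HasDerivAt (fun z : ℝ => 1 - z) (-1) y := by
      simpa using (hasDerivAt_id y).const_sub 1
    have h2 : HasDerivAt (fun z : ℝ => (1 - z) ^ (1 - l'))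
        (-1 * (1 - l') * (1 - y) ^ (1 - l' - 1)) y :=
      h1.rpow_const (Or.inl hy1.ne')
    have h3 := (hder y hy).mul h2
    have e2 : 1 - l' - 1 = -l' := by ring
    rw [e2] at h3
    have e1 : (1 - y) ^ (1 - l') = (1 - y) * (1 - y) ^ (-l') := by
      rw [show (1:ℝ) - l' = 1 + (-l') by ring, Real.rpow_add hy1, Real.rpow_one]
    have goal0 : (∑' k, g' k y) * (1 - y) ^ (1 - l')
        + f y * (-1 * (1 - l') * (1 - y) ^ (-l')) = 0 := by
      rw [e1]
      have := hode y hy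
      nlinarith [this, Real.rpow_pos_of_pos hy1 (-l')]
    have : HasDerivAt h ((∑' k, g' k y) * (1 - y) ^ (1 - l')
        + f y * (-1 * (1 - l') * (1 - y) ^ (-l'))) y := by
      rw [hh_def]
      exact h3
    rwa [goal0] at this
  have hsub : Set.Icc (0:ℝ) s ⊆ t := fun x hx =>
    ⟨by have := hx.1; linarith, lt_of_le_of_lt hx.2 hsr⟩
  have hconst : h s = h 0 := by
    have hcont : ContinuousOn h (Set.Icc 0 s) := fun x hx =>
      ((hderh x (hsub hx)).continuousAt).continuousWithinAt
    exact constant_of_has_deriv_right_zero hcont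
      (fun x hx => ((hderh x (hsub ⟨hx.1, hx.2.le⟩)).hasDerivWithinAt)) s
      (Set.right_mem_Icc.mpr hs0)
  have hf0 : f 0 = 1 := by
    have h00 : f 0 = ∑' k, g k 0 := rfl
    rw [h00, tsum_eq_single 0 (fun k hk => by simp [hg_def, zero_pow hk])]
    simp [hg_def, hc_def, poch]
  have h1s : 0 < 1 - s := by linarith
  have hfs : f s * (1 - s) ^ (1 - l') = 1 := by
    have hh0 : h 0 = f 0 * ((1:ℝ) - 0) ^ (1 - l') := rfl
    have h01 : h 0 = 1 := by rw [hh0, hf0]; norm_num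
    calc f s * (1 - s) ^ (1 - l') = h s := rfl
      _ = h 0 := hconst
      _ = 1 := h01
  have hfs' : f s = (1 - s) ^ (l' - 1) := by
    have hne : (0:ℝ) < (1 - s) ^ (1 - l') := Real.rpow_pos_of_pos h1s _
    have e : (1 - s) ^ (l' - 1) * (1 - s) ^ (1 - l') = 1 := by
      rw [← Real.rpow_add h1s]; norm_num
    field_simp at hfs e ⊢
    nlinarith [hfs, e]
  have hfin := (hsumm s hst).hasSum
  have : (∑' (b : ℕ), g b s) = (1 - s) ^ (l' - 1) := hfs'
  rw [this] at hfin
  exact hfin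

lemma beta_cont (a b : ℝ) :
    ContinuousOn (fun s : ℝ => s ^ (a - 1) * (1 - s) ^ (b - 1)) (Set.Ioo 0 1) := by
  apply ContinuousOn.mul
  · exact ContinuousOn.rpow_const continuousOn_id (fun x hx => Or.inl hx.1.ne')
  · exact ContinuousOn.rpow_const (continuousOn_const.sub continuousOn_id)
      (fun x hx => Or.inl (sub_ne_zero.mpr hx.2.ne'))

lemma beta_aesm (a b : ℝ) :
    AEStronglyMeasurable (fun s : ℝ => s ^ (a - 1) * (1 - s) ^ (b - 1))
      (volume.restrict (Set.Ioc (0:ℝ) 1)) := by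
  rw [← Measure.restrict_congr_set Ioo_ae_eq_Ioc]
  exact (beta_cont a b).aestronglyMeasurable measurableSet_Ioo

lemma beta_aesm' (a b : ℝ) {c d : ℝ} (h : Set.uIoc c d ⊆ Set.Ioc (0:ℝ) 1) :
    AEStronglyMeasurable (fun s : ℝ => s ^ (a - 1) * (1 - s) ^ (b - 1))
      (volume.restrict (Set.uIoc c d)) :=
  (beta_aesm a b).mono_measure (Measure.restrict_mono h le_rfl)

lemma beta_integrable {a b : ℝ} (ha : 0 < a) (hb : 0 < b) :
    IntervalIntegrable (fun s : ℝ => s ^ (a - 1) * (1 - s) ^ (b - 1)) volume 0 1 := by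
  have half : IntervalIntegrable (fun s : ℝ => s ^ (a - 1) * (1 - s) ^ (b - 1))
      volume 0 (1/2) := by
    set M : ℝ := max 1 ((1/2 : ℝ) ^ (b - 1)) with hM
    have hM0 : 0 < M := lt_of_lt_of_le one_pos (le_max_left _ _)
    have hg : IntervalIntegrable (fun s : ℝ => M * s ^ (a - 1)) volume 0 (1/2) :=
      (intervalIntegral.intervalIntegrable_rpow' (by linarith)).const_mul M
    apply hg.mono_fun' (beta_aesm' a b (by
      rw [Set.uIoc_of_le (by norm_num : (0:ℝ) ≤ 1/2)]
      exact Set.Ioc_subset_Ioc le_rfl (by norm_num)))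
    rw [Filter.EventuallyLE, ae_restrict_iff' measurableSet_uIoc]
    apply Filter.Eventually.of_forall
    intro s hs
    rw [Set.uIoc_of_le (by norm_num : (0:ℝ) ≤ 1/2)] at hs
    obtain ⟨hs0, hs1⟩ := hs
    have h1s : (1:ℝ)/2 ≤ 1 - s := by linarith
    have hb1 : (1 - s) ^ (b - 1) ≤ M := by
      rcases le_or_gt 1 b with h | h
      · calc (1 - s) ^ (b - 1) ≤ 1 ^ (b - 1) :=
            Real.rpow_le_rpow (by linarith) (by linarith) (by linarith)
          _ = 1 := Real.one_rpow _
          _ ≤ M := le_max_left _ _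
      · calc (1 - s) ^ (b - 1) ≤ (1/2 : ℝ) ^ (b - 1) :=
            Real.rpow_le_rpow_of_nonpos (by norm_num) h1s (by linarith)
          _ ≤ M := le_max_right _ _
    have hs0' : (0:ℝ) ≤ s := hs0.le
    simp only [Real.norm_eq_abs]
    rw [abs_of_nonneg (by positivity)]
    calc s ^ (a-1) * (1-s) ^ (b-1) ≤ s ^ (a-1) * M :=
        mul_le_mul_of_nonneg_left hb1 (Real.rpow_nonneg hs0' _)
      _ = M * s ^ (a-1) := mul_comm _ _
  have half2 : IntervalIntegrable (fun s : ℝ => s ^ (a - 1) * (1 - s) ^ (b - 1))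
      volume (1/2) 1 := by
    set M : ℝ := max 1 ((1/2 : ℝ) ^ (a - 1)) with hM
    have hM0 : 0 < M := lt_of_lt_of_le one_pos (le_max_left _ _)
    have hg0 : IntervalIntegrable (fun u : ℝ => u ^ (b - 1)) volume 0 (1/2) :=
      intervalIntegral.intervalIntegrable_rpow' (by linarith)
    have hg1 : IntervalIntegrable (fun s : ℝ => (1 - s) ^ (b - 1)) volume (1/2) 1 := by
      have h2 := (hg0.comp_sub_left 1).symm
      norm_num at h2
      exact h2
    have hg : IntervalIntegrable (fun s : ℝ => M * (1 - s) ^ (b - 1)) volume (1/2) 1 :=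
      hg1.const_mul M
    apply hg.mono_fun' (beta_aesm' a b (by
      rw [Set.uIoc_of_le (by norm_num : (1:ℝ)/2 ≤ 1)]
      exact Set.Ioc_subset_Ioc (by norm_num) le_rfl))
    rw [Filter.EventuallyLE, ae_restrict_iff' measurableSet_uIoc]
    apply Filter.Eventually.of_forall
    intro s hs
    rw [Set.uIoc_of_le (by norm_num : (1:ℝ)/2 ≤ 1)] at hs
    obtain ⟨hs0, hs1⟩ := hs
    have hs0' : (0:ℝ) < s := by linarith
    have h1s : (0:ℝ) ≤ 1 - s := by linarith
    have ha1 : s ^ (a - 1) ≤ M := by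
      rcases le_or_gt 1 a with h | h
      · calc s ^ (a-1) ≤ 1 ^ (a-1) :=
            Real.rpow_le_rpow (by linarith) hs1 (by linarith)
          _ = 1 := Real.one_rpow _
          _ ≤ M := le_max_left _ _
      · calc s ^ (a-1) ≤ (1/2:ℝ) ^ (a-1) :=
            Real.rpow_le_rpow_of_nonpos (by norm_num) hs0.le (by linarith)
          _ ≤ M := le_max_right _ _
    simp only [Real.norm_eq_abs]
    rw [abs_of_nonneg (by positivity)]
    exact mul_le_mul_of_nonneg_right ha1 (Real.rpow_nonneg h1s _)
  exact half.trans half2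

lemma poch_tail_sign (l' : ℝ) :
    ∃ ε : ℝ, (ε = 1 ∨ ε = -1) ∧ ∀ m, 0 ≤ ε * poch (1 - l') (⌈l'⌉₊ + m) := by
  set K := ⌈l'⌉₊ with hK
  refine ⟨if 0 ≤ poch (1 - l') K then 1 else -1, by split <;> simp, ?_⟩
  intro m
  induction m with
  | zero => split <;> rename_i h <;> simp only [Nat.add_zero] <;> [linarith; linarith [lt_of_not_ge h]]
  | succ n ih =>
    have hfac : (0:ℝ) ≤ 1 - l' + (K + n : ℕ) := by
      have h1 : (l':ℝ) ≤ K := Nat.le_ceil l'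
      push_cast
      linarith [Nat.cast_nonneg (α := ℝ) n]
    have : poch (1 - l') (K + (n+1)) = poch (1 - l') (K + n) * (1 - l' + (K + n : ℕ)) := by
      rw [show K + (n+1) = (K + n) + 1 from rfl, poch_succ]
    rw [this, ← mul_assoc]
    exact mul_nonneg ih hfac

lemma aux_int (l : ℝ) (hl : 0 < l) (k : ℕ) :
    (∫ s in (0:ℝ)..1, s ^ (l-1) * s ^ k) = 1 / (l + k) := by
  have hEq : Set.EqOn (fun s : ℝ => s ^ (l-1) * s ^ k)
      (fun s : ℝ => s ^ (l + k - 1)) (Set.uIcc (0:ℝ) 1) := by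
    intro s hs
    rw [Set.uIcc_of_le (by norm_num : (0:ℝ) ≤ 1)] at hs
    rcases eq_or_lt_of_le hs.1 with h0 | h0
    · rw [← h0]
      cases k with
      | zero => norm_num
      | succ n =>
        simp only [zero_pow (Nat.succ_ne_zero n), mul_zero]
        rw [Real.zero_rpow (by push_cast; linarith [Nat.cast_nonneg (α := ℝ) n] : l + ((n:ℕ)+1:ℕ) - 1 ≠ 0)]
    · show s ^ (l-1) * s ^ k = s ^ (l + k - 1)
      rw [← Real.rpow_natCast s k, ← Real.rpow_add h0]
      ring_nf
  rw [intervalIntegral.integral_congr hEq]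
  rw [integral_rpow (Or.inl (by push_cast; linarith [Nat.cast_nonneg (α := ℝ) k]))]
  rw [show l + (k:ℝ) - 1 + 1 = l + (k:ℝ) from by ring, Real.one_rpow,
    Real.zero_rpow (by positivity : (0:ℝ) < l + (k:ℝ)).ne']
  ring_nf

lemma aux_intble (l : ℝ) (hl : 0 < l) (k : ℕ) :
    IntervalIntegrable (fun s : ℝ => s ^ (l-1) * s ^ k) volume 0 1 := by
  have h := intervalIntegral.intervalIntegrable_rpow'
    (show (-1:ℝ) < l + k - 1 by push_cast; linarith [Nat.cast_nonneg (α := ℝ) k]) (a := 0) (b := 1)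
  apply h.congr_ae
  have hEq : Set.EqOn (fun s : ℝ => s ^ (l + k - 1))
      (fun s : ℝ => s ^ (l-1) * s ^ k) (Set.uIcc (0:ℝ) 1) := by
    intro s hs
    rw [Set.uIcc_of_le (by norm_num : (0:ℝ) ≤ 1)] at hs
    rcases eq_or_lt_of_le hs.1 with h0 | h0
    · rw [← h0]
      cases k with
      | zero => norm_num
      | succ n =>
        simp only [zero_pow (Nat.succ_ne_zero n), mul_zero]
        rw [Real.zero_rpow (by push_cast; linarith [Nat.cast_nonneg (α := ℝ) n] : l + ((n:ℕ)+1:ℕ) - 1 ≠ 0)]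
    · show s ^ (l + k - 1) = s ^ (l-1) * s ^ k
      rw [← Real.rpow_natCast s k, ← Real.rpow_add h0]
      ring_nf
  rw [Filter.EventuallyEq, ae_restrict_iff' measurableSet_uIoc]
  apply Filter.Eventually.of_forall
  intro s hs
  exact hEq (Set.uIoc_subset_uIcc hs)

set_option maxHeartbeats 2000000 in
/-- `Σ_{k=0}^∞ (1−λ')_k/(k!(λ+k))` converges to `B(λ,λ')`. -/
theorem stmt7 (l l' : ℝ) (hl : 0 < l) (hl' : 0 < l') :
    HasSum (fun k : ℕ => poch (1 - l') k / ((Nat.factorial k) * (l + k)))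
      (betaFn l l') := by
  set c : ℕ → ℝ := fun k => poch (1 - l') k / k.factorial with hc_def
  set a : ℕ → ℝ := fun k => poch (1 - l') k / ((Nat.factorial k) * (l + k)) with ha_def
  set K := ⌈l'⌉₊ with hK_def
  obtain ⟨ε, hε1, hεsign⟩ := poch_tail_sign l'
  have hεsq : ε * ε = 1 := by rcases hε1 with h | h <;> rw [h] <;> norm_num
  have hεabs : ∀ x : ℝ, 0 ≤ ε * x → |x| = ε * x := by
    intro x hx
    rcases hε1 with h | h <;> rw [h] at hx ⊢
    · rw [one_mul] at hx ⊢; exact abs_of_nonneg hx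
    · rw [neg_one_mul] at hx ⊢
      exact abs_of_nonpos (by linarith)
  have hlk : ∀ k : ℕ, (0:ℝ) < l + k := fun k => by positivity
  have hak : ∀ k, a k = c k * (1 / (l + k)) := by
    intro k
    rw [ha_def, hc_def]
    have h1 : (k.factorial : ℝ) ≠ 0 := by exact_mod_cast (Nat.factorial_pos k).ne'
    field_simp
  set A : ℝ := ∑ k ∈ Finset.range K, |c k| with hA_def
  have hA0 : 0 ≤ A := Finset.sum_nonneg fun _ _ => abs_nonneg _
  set bound : ℝ → ℝ := fun s => 2 * A * s ^ (l-1) + s ^ (l-1) * (1-s) ^ (l'-1) with hbound_def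
  set F : ℕ → ℝ → ℝ := fun N s => s ^ (l-1) * ∑ k ∈ Finset.range N, c k * s ^ k with hF_def
  -- Step B : integral of F N
  have hFint : ∀ N, (∫ s in (0:ℝ)..1, F N s) = ∑ k ∈ Finset.range N, a k := by
    intro N
    have h1 : ∀ s : ℝ, F N s = ∑ k ∈ Finset.range N, c k * (s ^ (l-1) * s ^ k) := by
      intro s
      simp only [hF_def]
      rw [Finset.mul_sum]
      apply Finset.sum_congr rfl
      intro k _
      ring
    rw [intervalIntegral.integral_congr (fun s _ => h1 s)]
    rw [intervalIntegral.integral_finset_sum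
      (fun k _ => (aux_intble l hl k).const_mul (c k))]
    apply Finset.sum_congr rfl
    intro k _
    rw [intervalIntegral.integral_const_mul, aux_int l hl k, hak k]
  -- measurability
  have hIoc : Set.uIoc (0:ℝ) 1 = Set.Ioc (0:ℝ) 1 := Set.uIoc_of_le (by norm_num)
  have hFmeas : ∀ N, AEStronglyMeasurable (F N) (volume.restrict (Set.uIoc (0:ℝ) 1)) := by
    intro N
    rw [hIoc, ← Measure.restrict_congr_set Ioo_ae_eq_Ioc]
    apply ContinuousOn.aestronglyMeasurable _ measurableSet_Ioo
    apply ContinuousOn.mul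
    · exact ContinuousOn.rpow_const continuousOn_id (fun x hx => Or.inl hx.1.ne')
    · exact (continuous_finset_sum _ (fun k _ => continuous_const.mul (continuous_pow k))).continuousOn
  -- a.e. avoid s = 1
  have hae1 : ∀ᵐ s : ℝ ∂volume, s ≠ 1 := by
    have : volume ({1} : Set ℝ) = 0 := Real.volume_singleton
    rw [MeasureTheory.ae_iff]
    convert this using 2
    ext x
    simp
  -- key pointwise bound
  have habs_summ : ∀ s : ℝ, 0 ≤ s → s < 1 → Summable (fun k => |c k * s ^ k|) := by
    intro s hs0 hs1
    have hbin := binomial_hasSum l' hl' hs0 hs1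
    apply (summable_nat_add_iff K).mp
    have h2 : Summable (fun m : ℕ => ε * (c (m + K) * s ^ (m + K))) :=
      (((summable_nat_add_iff K).mpr hbin.summable)).mul_left ε
    apply h2.congr
    intro m
    have := hεsign m
    rw [show K + m = m + K from Nat.add_comm K m] at this
    have hsign : 0 ≤ ε * (c (m + K) * s ^ (m + K)) := by
      have hc' : c (m + K) = poch (1 - l') (m + K) / (m + K).factorial := rfl
      rw [hc']
      have hf : (0:ℝ) < ((m + K).factorial : ℝ) := by exact_mod_cast (m + K).factorial_pos
      have hsp : (0:ℝ) ≤ s ^ (m + K) := pow_nonneg hs0 _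
      calc (0:ℝ) ≤ (ε * poch (1 - l') (m + K)) * (s ^ (m + K) / (m + K).factorial) := by
            apply mul_nonneg this (by positivity)
        _ = ε * (poch (1 - l') (m + K) / (m + K).factorial * s ^ (m + K)) := by ring
    rw [hεabs _ hsign]
  have hbound_pt : ∀ s : ℝ, 0 ≤ s → s < 1 → (∑' k, |c k * s ^ k|) ≤ 2 * A + (1 - s) ^ (l' - 1) := by
    intro s hs0 hs1
    have hbin := binomial_hasSum l' hl' hs0 hs1
    have habs := habs_summ s hs0 hs1
    have hsplit := habs.sum_add_tsum_nat_add K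
    have hhead : (∑ k ∈ Finset.range K, |c k * s ^ k|) ≤ A := by
      rw [hA_def]
      apply Finset.sum_le_sum
      intro k _
      rw [abs_mul]
      calc |c k| * |s ^ k| ≤ |c k| * 1 := by
            apply mul_le_mul_of_nonneg_left _ (abs_nonneg _)
            rw [abs_pow, abs_of_nonneg hs0]
            exact pow_le_one₀ hs0 hs1.le
        _ = |c k| := mul_one _
    have htail : (∑' m : ℕ, |c (m + K) * s ^ (m + K)|) ≤ A + (1 - s) ^ (l' - 1) := by
      have heq : ∀ m : ℕ, |c (m + K) * s ^ (m + K)| = ε * (c (m + K) * s ^ (m + K)) := by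
        intro m
        apply hεabs
        have := hεsign m
        rw [show K + m = m + K from Nat.add_comm K m] at this
        have hf : (0:ℝ) < ((m + K).factorial : ℝ) := by exact_mod_cast (m + K).factorial_pos
        have hsp : (0:ℝ) ≤ s ^ (m + K) := pow_nonneg hs0 _
        calc (0:ℝ) ≤ (ε * poch (1 - l') (m + K)) * (s ^ (m + K) / (m + K).factorial) :=
              mul_nonneg this (by positivity)
          _ = ε * (poch (1 - l') (m + K) / (m + K).factorial * s ^ (m + K)) := by ring
      rw [tsum_congr heq]
      have hshift : Summable (fun m : ℕ => c (m + K) * s ^ (m + K)) :=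
        (summable_nat_add_iff K).mpr hbin.summable
      rw [tsum_mul_left]
      have htailval : (∑' m : ℕ, c (m + K) * s ^ (m + K))
          = (1 - s) ^ (l' - 1) - ∑ k ∈ Finset.range K, c k * s ^ k := by
        have := hbin.summable.sum_add_tsum_nat_add K
        rw [hbin.tsum_eq] at this
        linarith
      rw [htailval]
      calc ε * ((1 - s) ^ (l' - 1) - ∑ k ∈ Finset.range K, c k * s ^ k)
          ≤ |(1 - s) ^ (l' - 1) - ∑ k ∈ Finset.range K, c k * s ^ k| := by
            rcases hε1 with h | h
            · rw [h, one_mul]; exact le_abs_self _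
            · rw [h, neg_one_mul]; exact neg_le_abs _
        _ ≤ |(1 - s) ^ (l' - 1)| + |∑ k ∈ Finset.range K, c k * s ^ k| := abs_sub _ _
        _ ≤ (1 - s) ^ (l' - 1) + A := by
            apply add_le_add
            · rw [abs_of_nonneg (Real.rpow_nonneg (by linarith) _)]
            · calc |∑ k ∈ Finset.range K, c k * s ^ k| ≤ ∑ k ∈ Finset.range K, |c k * s ^ k| :=
                  Finset.abs_sum_le_sum_abs _ _
                _ ≤ A := hhead
        _ = A + (1 - s) ^ (l' - 1) := by ring
    calc (∑' k, |c k * s ^ k|)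
        = (∑ k ∈ Finset.range K, |c k * s ^ k|) + ∑' m : ℕ, |c (m + K) * s ^ (m + K)| :=
          hsplit.symm
      _ ≤ A + (A + (1 - s) ^ (l' - 1)) := add_le_add hhead htail
      _ = 2 * A + (1 - s) ^ (l' - 1) := by ring
  -- Step C : dominated convergence
  have hC : Filter.Tendsto (fun N => ∫ s in (0:ℝ)..1, F N s) Filter.atTop
      (nhds (betaFn l l')) := by
    rw [betaFn]
    apply intervalIntegral.tendsto_integral_filter_of_dominated_convergence bound
    · exact Filter.Eventually.of_forall hFmeas
    · apply Filter.Eventually.of_forall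
      intro N
      filter_upwards [hae1] with s hs1 hsI
      rw [hIoc] at hsI
      obtain ⟨hs0, hs1'⟩ := hsI
      have hslt : s < 1 := lt_of_le_of_ne hs1' hs1
      have hsnn : (0:ℝ) ≤ s := hs0.le
      have h1 : ‖F N s‖ ≤ s ^ (l-1) * (2 * A + (1 - s) ^ (l' - 1)) := by
        rw [hF_def]
        simp only [Real.norm_eq_abs, abs_mul]
        rw [abs_of_nonneg (Real.rpow_nonneg hsnn _)]
        apply mul_le_mul_of_nonneg_left _ (Real.rpow_nonneg hsnn _)
        calc |∑ k ∈ Finset.range N, c k * s ^ k| ≤ ∑ k ∈ Finset.range N, |c k * s ^ k| :=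
              Finset.abs_sum_le_sum_abs _ _
          _ ≤ ∑' k, |c k * s ^ k| :=
              Summable.sum_le_tsum _ (fun k _ => abs_nonneg _) (habs_summ s hsnn hslt)
          _ ≤ 2 * A + (1 - s) ^ (l' - 1) := hbound_pt s hsnn hslt
      calc ‖F N s‖ ≤ s ^ (l-1) * (2 * A + (1 - s) ^ (l' - 1)) := h1
        _ = bound s := by rw [hbound_def]; ring
    · rw [hbound_def]
      apply IntervalIntegrable.add
      · exact ((intervalIntegral.intervalIntegrable_rpow' (by linarith)).const_mul (2*A))
      · exact beta_integrable hl hl'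
    · filter_upwards [hae1] with s hs1 hsI
      rw [hIoc] at hsI
      obtain ⟨hs0, hs1'⟩ := hsI
      have hslt : s < 1 := lt_of_le_of_ne hs1' hs1
      have hbin := binomial_hasSum l' hl' hs0.le hslt
      have := hbin.tendsto_sum_nat
      exact Filter.Tendsto.const_mul (s ^ (l-1)) this
  have hT : Filter.Tendsto (fun N => ∑ k ∈ Finset.range N, a k) Filter.atTop
      (nhds (betaFn l l')) := by
    apply hC.congr
    intro N
    exact hFint N
  -- Step D : summability
  have hsign_a : ∀ m, 0 ≤ ε * a (K + m) := by
    intro m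
    have := hεsign m
    have hf : (0:ℝ) < ((K + m).factorial : ℝ) := by exact_mod_cast (K + m).factorial_pos
    have hl2 : (0:ℝ) < l + (K + m : ℕ) := hlk _
    have ha' : a (K + m) = poch (1 - l') (K + m) / ((K + m).factorial * (l + (K + m : ℕ))) := rfl
    rw [ha']
    calc (0:ℝ) ≤ (ε * poch (1 - l') (K + m)) * (1 / ((K + m).factorial * (l + (K + m : ℕ)))) :=
          mul_nonneg this (by positivity)
      _ = ε * (poch (1 - l') (K + m) / ((K + m).factorial * (l + (K + m : ℕ)))) := by ring
  have hTK := hT.comp (Filter.tendsto_add_atTop_nat K)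
  have hP : Filter.Tendsto (fun n => ∑ m ∈ Finset.range n, ε * a (K + m)) Filter.atTop
      (nhds (ε * (betaFn l l' - ∑ k ∈ Finset.range K, a k))) := by
    have heq : ∀ n, (∑ m ∈ Finset.range n, ε * a (K + m))
        = ε * ((∑ k ∈ Finset.range (n + K), a k) - ∑ k ∈ Finset.range K, a k) := by
      intro n
      rw [show n + K = K + n from Nat.add_comm n K, Finset.sum_range_add (f := a) K n]
      rw [← Finset.mul_sum]
      ring
    simp only [heq]
    exact (Filter.Tendsto.sub (by exact hTK) tendsto_const_nhds).const_mul ε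
  have hmono : Monotone (fun n => ∑ m ∈ Finset.range n, ε * a (K + m)) := by
    apply monotone_nat_of_le_succ
    intro n
    rw [Finset.sum_range_succ]
    linarith [hsign_a n]
  have hbdd : ∀ n, (∑ m ∈ Finset.range n, ε * a (K + m))
      ≤ ε * (betaFn l l' - ∑ k ∈ Finset.range K, a k) :=
    fun n => hmono.ge_of_tendsto hP n
  have hsum_tail : Summable (fun m => ε * a (K + m)) :=
    summable_of_sum_range_le (fun m => hsign_a m) hbdd
  have hsum_tail' : Summable (fun m => a (K + m)) := by
    have := hsum_tail.mul_left ε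
    apply this.congr
    intro m
    rw [← mul_assoc, hεsq, one_mul]
  have hsum : Summable a := by
    apply (summable_nat_add_iff K).mp
    apply hsum_tail'.congr
    intro m
    rw [Nat.add_comm]
  have hfinal := hsum.hasSum
  have htends := hfinal.tendsto_sum_nat
  have heq : (∑' k, a k) = betaFn l l' := tendsto_nhds_unique htends hT
  rw [heq] at hfinal
  exact hfinal
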